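/- arXiv:0709.3360 — 3 statements merged into one kernel-verified Lean document; each statement's English description precedes it below -/
import Mathlib

section
/- For every Schwartz function φ and every x ∈ ℝ, the nonlocal operator I[φ](x) := ∫₀^∞ ζ^(-1/3) φ''(x−ζ) dζ satisfies I[φ](x) = (4/9) ∫_{-∞}^0 (φ(x+z) − φ(x) − φ'(x)·z)/|z|^(7/3) dz. -/
open MeasureTheory Set Filter

/-- Every Schwartz function (ℝ → ℝ) is bounded. -/
lemma schwartz_abs_bound (f : SchwartzMap ℝ ℝ) : ∃ C : ℝ, 0 < C ∧ ∀ y, |f y| ≤ C := by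
  obtain ⟨C, hC, h⟩ := f.decay 0 0
  refine ⟨C, hC, fun y => ?_⟩
  have := h y
  simpa [norm_iteratedFDeriv_zero, Real.norm_eq_abs] using this

/-- Integrability criterion on `(0, ∞)` with a `ζ^(-1/3)` bound near `0` and a
given integrable majorant on `(1, ∞)`. -/
lemma integrableOn_Ioi_of_bounds (f g : ℝ → ℝ)
    (hcont : ContinuousOn f (Set.Ioi 0))
    (C1 : ℝ)
    (h1 : ∀ ζ ∈ Set.Ioc (0:ℝ) 1, |f ζ| ≤ C1 * ζ ^ (-(1:ℝ)/3))
    (hg : IntegrableOn g (Set.Ioi 1))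
    (h2 : ∀ ζ ∈ Set.Ioi (1:ℝ), |f ζ| ≤ g ζ) :
    IntegrableOn f (Set.Ioi (0:ℝ)) := by
  have hmeas : AEStronglyMeasurable f (volume.restrict (Set.Ioi (0:ℝ))) :=
    hcont.aestronglyMeasurable measurableSet_Ioi
  rw [← Set.Ioc_union_Ioi_eq_Ioi (zero_le_one : (0:ℝ) ≤ 1)]
  apply MeasureTheory.IntegrableOn.union
  · have base : IntegrableOn (fun ζ : ℝ => ζ ^ (-(1:ℝ)/3)) (Set.Ioc (0:ℝ) 1) := by
      have := intervalIntegral.intervalIntegrable_rpow' (a := (0:ℝ)) (b := 1)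
        (r := -(1:ℝ)/3) (by norm_num)
      exact (intervalIntegrable_iff_integrableOn_Ioc_of_le zero_le_one).1 this
    have base' : IntegrableOn (fun ζ : ℝ => C1 * ζ ^ (-(1:ℝ)/3)) (Set.Ioc (0:ℝ) 1) :=
      base.const_mul C1
    refine base'.integrable.mono' ?_ ?_
    · exact hmeas.mono_measure
        (Measure.restrict_mono Set.Ioc_subset_Ioi_self le_rfl)
    · exact (ae_restrict_iff' measurableSet_Ioc).2 (Filter.Eventually.of_forall
        (fun ζ hζ => by simpa [Real.norm_eq_abs] using h1 ζ hζ))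
  · refine hg.integrable.mono' ?_ ?_
    · refine hmeas.mono_measure (Measure.restrict_mono ?_ le_rfl)
      exact fun ζ hζ => Set.mem_Ioi.2 (lt_trans one_pos (Set.mem_Ioi.1 hζ))
    · exact (ae_restrict_iff' measurableSet_Ioi).2 (Filter.Eventually.of_forall
        (fun ζ hζ => by simpa [Real.norm_eq_abs] using h2 ζ hζ))

theorem stmt_0 (φ : SchwartzMap ℝ ℝ) (x : ℝ) :
    (∫ ζ in Set.Ioi (0:ℝ), ζ ^ (-(1:ℝ)/3) * deriv (deriv ⇑φ) (x - ζ))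
      = (4/9) * ∫ z in Set.Iio (0:ℝ),
          (φ (x + z) - φ x - deriv (⇑φ) x * z) / |z| ^ ((7:ℝ)/3) := by
  set ψ1 : SchwartzMap ℝ ℝ := SchwartzMap.derivCLM ℝ ℝ φ with hψ1def
  set ψ2 : SchwartzMap ℝ ℝ := SchwartzMap.derivCLM ℝ ℝ ψ1 with hψ2def
  have hd1 : deriv ⇑φ = ⇑ψ1 := by
    funext y; exact (SchwartzMap.derivCLM_apply (𝕜 := ℝ) φ y).symm
  have hd2 : deriv (deriv ⇑φ) = ⇑ψ2 := by
    rw [hd1]; funext y; exact (SchwartzMap.derivCLM_apply (𝕜 := ℝ) ψ1 y).symm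
  obtain ⟨B0, hB0pos, hB0⟩ := schwartz_abs_bound φ
  obtain ⟨B1, hB1pos, hB1⟩ := schwartz_abs_bound ψ1
  obtain ⟨B2, hB2pos, hB2⟩ := schwartz_abs_bound ψ2
  set F : ℝ → ℝ := fun ζ => φ (x - ζ) - φ x + ψ1 x * ζ with hF
  set G : ℝ → ℝ := fun ζ => ψ1 x - ψ1 (x - ζ) with hG
  -- basic derivative facts
  have hφderiv : ∀ y, HasDerivAt ⇑φ (ψ1 y) y := fun y => by
    have h := (φ.differentiable y).hasDerivAt
    rwa [hd1] at h
  have hψ1deriv : ∀ y, HasDerivAt ⇑ψ1 (ψ2 y) y := fun y => by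
    have h := (ψ1.differentiable y).hasDerivAt
    have h2 : deriv ⇑ψ1 = ⇑ψ2 := by
      funext z; exact (SchwartzMap.derivCLM_apply (𝕜 := ℝ) ψ1 z).symm
    rwa [h2] at h
  have hsub : ∀ ζ : ℝ, HasDerivAt (fun t : ℝ => x - t) (-1) ζ := fun ζ => by
    simpa using (hasDerivAt_id ζ).const_sub x
  have hGderiv : ∀ ζ : ℝ, HasDerivAt G (ψ2 (x - ζ)) ζ := fun ζ => by
    have h2 := (hψ1deriv (x - ζ)).comp ζ (hsub ζ)
    have h3 := h2.const_sub (ψ1 x)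
    simpa [hG] using h3
  have hFderiv : ∀ ζ : ℝ, HasDerivAt F (G ζ) ζ := fun ζ => by
    have h2 := (hφderiv (x - ζ)).comp ζ (hsub ζ)
    have h3 := (h2.sub_const (φ x)).add ((hasDerivAt_id ζ).const_mul (ψ1 x))
    have h4 : HasDerivAt F (ψ1 (x - ζ) * (-1) + ψ1 x * 1) ζ := h3
    convert h4 using 1
    simp [hG]; ring
  -- pointwise bounds
  have hGbound : ∀ ζ : ℝ, 0 ≤ ζ → |G ζ| ≤ B2 * ζ := by
    intro ζ hζ
    have hmvt := norm_image_sub_le_of_norm_deriv_le_segment'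
      (f := G) (f' := fun t => ψ2 (x - t)) (a := 0) (b := ζ) (C := B2)
      (fun t _ => (hGderiv t).hasDerivWithinAt)
      (fun t _ => by simpa [Real.norm_eq_abs] using hB2 (x - t))
      ζ (Set.right_mem_Icc.2 hζ)
    simpa [hG, Real.norm_eq_abs] using hmvt
  have hFbound : ∀ ζ : ℝ, 0 ≤ ζ → |F ζ| ≤ B2 * ζ * ζ := by
    intro ζ hζ
    have hmvt := norm_image_sub_le_of_norm_deriv_le_segment'
      (f := F) (f' := G) (a := 0) (b := ζ) (C := B2 * ζ)
      (fun t _ => (hFderiv t).hasDerivWithinAt)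
      (fun t ht => by
        have h1 := hGbound t ht.1
        have : B2 * t ≤ B2 * ζ :=
          mul_le_mul_of_nonneg_left (le_of_lt ht.2) hB2pos.le
        simpa [Real.norm_eq_abs] using h1.trans this)
      ζ (Set.right_mem_Icc.2 hζ)
    have hF0 : F 0 = 0 := by simp [hF]
    simpa [hF0, Real.norm_eq_abs, abs_of_nonneg hζ] using hmvt
  have hGabs : ∀ ζ : ℝ, |G ζ| ≤ 2 * B1 := by
    intro ζ
    have := (abs_sub (ψ1 x) (ψ1 (x - ζ)))
    calc |G ζ| ≤ |ψ1 x| + |ψ1 (x - ζ)| := abs_sub _ _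
      _ ≤ B1 + B1 := add_le_add (hB1 x) (hB1 (x - ζ))
      _ = 2 * B1 := by ring
  have hFabs : ∀ ζ : ℝ, 1 ≤ ζ → |F ζ| ≤ (2 * B0 + |ψ1 x|) * ζ := by
    intro ζ hζ
    have h1 : |F ζ| ≤ 2 * B0 + |ψ1 x| * ζ := by
      have : |F ζ| ≤ |φ (x - ζ) - φ x| + |ψ1 x * ζ| := abs_add_le _ _
      have h2 : |φ (x - ζ) - φ x| ≤ B0 + B0 :=
        (abs_sub _ _).trans (add_le_add (hB0 _) (hB0 _))
      have h3 : |ψ1 x * ζ| = |ψ1 x| * ζ := by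
        rw [abs_mul, abs_of_nonneg (by linarith : (0:ℝ) ≤ ζ)]
      calc |F ζ| ≤ |φ (x - ζ) - φ x| + |ψ1 x * ζ| := abs_add_le _ _
        _ ≤ (B0 + B0) + |ψ1 x| * ζ := by rw [h3]; exact add_le_add h2 le_rfl
        _ = 2 * B0 + |ψ1 x| * ζ := by ring
    have h4 : 2 * B0 ≤ 2 * B0 * ζ := by nlinarith
    calc |F ζ| ≤ 2 * B0 + |ψ1 x| * ζ := h1
      _ ≤ 2 * B0 * ζ + |ψ1 x| * ζ := by linarith
      _ = (2 * B0 + |ψ1 x|) * ζ := by ring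
  -- rpow facts
  have hrpow : ∀ (p : ℝ) (ζ : ℝ), 0 < ζ →
      HasDerivAt (fun t : ℝ => t ^ p) (p * ζ ^ (p - 1)) ζ := fun p ζ hζ =>
    Real.hasDerivAt_rpow_const (Or.inl hζ.ne')
  have hrc : ∀ p : ℝ, ContinuousOn (fun ζ : ℝ => ζ ^ p) (Set.Ioi (0:ℝ)) := fun p ζ hζ =>
    (Real.continuousAt_rpow_const ζ p (Or.inl (ne_of_gt hζ))).continuousWithinAt
  have hrmul : ∀ {ζ : ℝ}, 0 < ζ → ∀ p : ℝ, ζ ^ p * ζ = ζ ^ (p + 1) := by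
    intro ζ hζ p
    rw [Real.rpow_add hζ, Real.rpow_one]
  have hGcont : Continuous G := by
    exact continuous_const.sub (ψ1.continuous.comp (continuous_const.sub continuous_id))
  have hFcont : Continuous F := by
    exact ((φ.continuous.comp (continuous_const.sub continuous_id)).sub
      continuous_const).add (continuous_const.mul continuous_id)
  have hψ2cont : Continuous (fun ζ : ℝ => ψ2 (x - ζ)) :=
    ψ2.continuous.comp (continuous_const.sub continuous_id)
  -- integrability of the three basic integrands
  have intA : IntegrableOn (fun ζ : ℝ => ζ ^ (-(1:ℝ)/3) * ψ2 (x - ζ)) (Set.Ioi (0:ℝ)) := by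
    apply integrableOn_Ioi_of_bounds _ (fun ζ => |ψ2 (x - ζ)|)
      ((hrc _).mul hψ2cont.continuousOn) B2
    · intro ζ hζ
      have h0 : (0:ℝ) ≤ ζ ^ (-(1:ℝ)/3) := Real.rpow_nonneg hζ.1.le _
      rw [Pi.mul_apply, abs_mul, abs_of_nonneg h0]
      calc ζ ^ (-(1:ℝ)/3) * |ψ2 (x - ζ)| ≤ ζ ^ (-(1:ℝ)/3) * B2 :=
            mul_le_mul_of_nonneg_left (hB2 _) h0
        _ = B2 * ζ ^ (-(1:ℝ)/3) := by ring
    · exact (((ψ2.integrable (μ := volume)).comp_sub_left x).norm).integrableOn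
    · intro ζ hζ
      have hζ1 : (1:ℝ) ≤ ζ := le_of_lt hζ
      have h0 : (0:ℝ) ≤ ζ ^ (-(1:ℝ)/3) := Real.rpow_nonneg (by linarith) _
      have hle1 : ζ ^ (-(1:ℝ)/3) ≤ 1 :=
        Real.rpow_le_one_of_one_le_of_nonpos hζ1 (by norm_num)
      rw [Pi.mul_apply, abs_mul, abs_of_nonneg h0]
      calc ζ ^ (-(1:ℝ)/3) * |ψ2 (x - ζ)| ≤ 1 * |ψ2 (x - ζ)| :=
            mul_le_mul_of_nonneg_right hle1 (abs_nonneg _)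
        _ = |ψ2 (x - ζ)| := one_mul _
  have intB : IntegrableOn (fun ζ : ℝ => ζ ^ (-(4:ℝ)/3) * G ζ) (Set.Ioi (0:ℝ)) := by
    apply integrableOn_Ioi_of_bounds _ (fun ζ => (2 * B1) * ζ ^ (-(4:ℝ)/3))
      ((hrc _).mul hGcont.continuousOn) B2
    · intro ζ hζ
      have h0 : (0:ℝ) ≤ ζ ^ (-(4:ℝ)/3) := Real.rpow_nonneg hζ.1.le _
      rw [Pi.mul_apply, abs_mul, abs_of_nonneg h0]
      calc ζ ^ (-(4:ℝ)/3) * |G ζ| ≤ ζ ^ (-(4:ℝ)/3) * (B2 * ζ) :=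
            mul_le_mul_of_nonneg_left (hGbound ζ hζ.1.le) h0
        _ = B2 * (ζ ^ (-(4:ℝ)/3) * ζ) := by ring
        _ = B2 * ζ ^ (-(1:ℝ)/3) := by
            rw [hrmul hζ.1, show (-(4:ℝ)/3 + 1) = -(1:ℝ)/3 by norm_num]
    · exact (integrableOn_Ioi_rpow_of_lt (by norm_num) one_pos).const_mul _
    · intro ζ hζ
      have hζ0 : (0:ℝ) < ζ := lt_trans one_pos hζ
      have h0 : (0:ℝ) ≤ ζ ^ (-(4:ℝ)/3) := Real.rpow_nonneg hζ0.le _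
      rw [Pi.mul_apply, abs_mul, abs_of_nonneg h0]
      calc ζ ^ (-(4:ℝ)/3) * |G ζ| ≤ ζ ^ (-(4:ℝ)/3) * (2 * B1) :=
            mul_le_mul_of_nonneg_left (hGabs ζ) h0
        _ = (2 * B1) * ζ ^ (-(4:ℝ)/3) := by ring
  have intC : IntegrableOn (fun ζ : ℝ => ζ ^ (-(7:ℝ)/3) * F ζ) (Set.Ioi (0:ℝ)) := by
    apply integrableOn_Ioi_of_bounds _
      (fun ζ => (2 * B0 + |ψ1 x|) * ζ ^ (-(4:ℝ)/3))
      ((hrc _).mul hFcont.continuousOn) B2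
    · intro ζ hζ
      have h0 : (0:ℝ) ≤ ζ ^ (-(7:ℝ)/3) := Real.rpow_nonneg hζ.1.le _
      rw [Pi.mul_apply, abs_mul, abs_of_nonneg h0]
      calc ζ ^ (-(7:ℝ)/3) * |F ζ| ≤ ζ ^ (-(7:ℝ)/3) * (B2 * ζ * ζ) :=
            mul_le_mul_of_nonneg_left (hFbound ζ hζ.1.le) h0
        _ = B2 * (ζ ^ (-(7:ℝ)/3) * ζ * ζ) := by ring
        _ = B2 * ζ ^ (-(1:ℝ)/3) := by
            rw [hrmul hζ.1, hrmul hζ.1,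
              show (-(7:ℝ)/3 + 1 + 1) = -(1:ℝ)/3 by norm_num]
    · exact (integrableOn_Ioi_rpow_of_lt (by norm_num) one_pos).const_mul _
    · intro ζ hζ
      have hζ0 : (0:ℝ) < ζ := lt_trans one_pos hζ
      have h0 : (0:ℝ) ≤ ζ ^ (-(7:ℝ)/3) := Real.rpow_nonneg hζ0.le _
      rw [Pi.mul_apply, abs_mul, abs_of_nonneg h0]
      calc ζ ^ (-(7:ℝ)/3) * |F ζ| ≤ ζ ^ (-(7:ℝ)/3) * ((2 * B0 + |ψ1 x|) * ζ) :=
            mul_le_mul_of_nonneg_left (hFabs ζ (le_of_lt hζ)) h0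
        _ = (2 * B0 + |ψ1 x|) * (ζ ^ (-(7:ℝ)/3) * ζ) := by ring
        _ ≤ (2 * B0 + |ψ1 x|) * ζ ^ (-(4:ℝ)/3) := by
            rw [hrmul hζ0, show (-(7:ℝ)/3 + 1) = -(4:ℝ)/3 by norm_num]
  -- step 1: integrate by parts  ζ^{-1/3} G
  set f1 : ℝ → ℝ := fun ζ => ζ ^ (-(1:ℝ)/3) * G ζ with hf1
  set d1 : ℝ → ℝ := fun ζ =>
    -(1:ℝ)/3 * (ζ ^ (-(4:ℝ)/3) * G ζ) + ζ ^ (-(1:ℝ)/3) * ψ2 (x - ζ) with hd1'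
  have hf1deriv : ∀ ζ ∈ Set.Ioi (0:ℝ), HasDerivAt f1 (d1 ζ) ζ := by
    intro ζ hζ
    have h : HasDerivAt f1 _ ζ := (hrpow (-(1:ℝ)/3) ζ hζ).mul (hGderiv ζ)
    convert h using 1
    rw [hd1', show (-(1:ℝ)/3 - 1) = -(4:ℝ)/3 by norm_num]
    ring
  have hf1zero : f1 0 = 0 := by
    simp [hf1, hG, Real.zero_rpow (by norm_num : (-(1:ℝ)/3) ≠ 0)]
  have hcont1 : ContinuousWithinAt f1 (Set.Ici (0:ℝ)) 0 := by
    have hb : ∀ ζ ∈ Set.Ici (0:ℝ), ‖f1 ζ‖ ≤ B2 * ζ ^ ((2:ℝ)/3) := by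
      intro ζ hζ
      rcases eq_or_lt_of_le (Set.mem_Ici.1 hζ : (0:ℝ) ≤ ζ) with h | h
      · rw [← h, hf1zero]
        simp [Real.zero_rpow (show ((2:ℝ)/3) ≠ 0 by norm_num)]
      · have h0 : (0:ℝ) ≤ ζ ^ (-(1:ℝ)/3) := Real.rpow_nonneg h.le _
        rw [Real.norm_eq_abs, hf1, abs_mul, abs_of_nonneg h0]
        calc ζ ^ (-(1:ℝ)/3) * |G ζ| ≤ ζ ^ (-(1:ℝ)/3) * (B2 * ζ) :=
              mul_le_mul_of_nonneg_left (hGbound ζ h.le) h0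
          _ = B2 * (ζ ^ (-(1:ℝ)/3) * ζ) := by ring
          _ = B2 * ζ ^ ((2:ℝ)/3) := by
              rw [hrmul h, show (-(1:ℝ)/3 + 1) = (2:ℝ)/3 by norm_num]
    have hg0 : Tendsto (fun ζ : ℝ => B2 * ζ ^ ((2:ℝ)/3)) (nhdsWithin 0 (Set.Ici 0)) (nhds 0) := by
      have h1 : Tendsto (fun ζ : ℝ => ζ ^ ((2:ℝ)/3)) (nhds 0) (nhds ((0:ℝ) ^ ((2:ℝ)/3))) :=
        (Real.continuousAt_rpow_const 0 ((2:ℝ)/3) (Or.inr (by norm_num)))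
      rw [Real.zero_rpow (by norm_num : ((2:ℝ)/3) ≠ 0)] at h1
      have h3 := (h1.mono_left (nhdsWithin_le_nhds (s := Set.Ici 0))).const_mul B2
      simpa using h3
    have := squeeze_zero_norm' (Filter.eventually_of_mem self_mem_nhdsWithin hb) hg0
    unfold ContinuousWithinAt
    rwa [hf1zero]
  have htop1 : Tendsto f1 atTop (nhds 0) := by
    have hb : ∀ ζ ∈ Set.Ioi (0:ℝ), ‖f1 ζ‖ ≤ (2 * B1) * ζ ^ (-(1:ℝ)/3) := by
      intro ζ hζ
      have h0 : (0:ℝ) ≤ ζ ^ (-(1:ℝ)/3) := Real.rpow_nonneg (le_of_lt hζ) _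
      rw [Real.norm_eq_abs, hf1, abs_mul, abs_of_nonneg h0]
      calc ζ ^ (-(1:ℝ)/3) * |G ζ| ≤ ζ ^ (-(1:ℝ)/3) * (2 * B1) :=
            mul_le_mul_of_nonneg_left (hGabs ζ) h0
        _ = (2 * B1) * ζ ^ (-(1:ℝ)/3) := by ring
    have hg0 : Tendsto (fun ζ : ℝ => (2 * B1) * ζ ^ (-(1:ℝ)/3)) atTop (nhds 0) := by
      have h1 : Tendsto (fun ζ : ℝ => ζ ^ (-((1:ℝ)/3))) atTop (nhds 0) :=
        tendsto_rpow_neg_atTop (by norm_num)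
      simpa [neg_div] using h1.const_mul (2 * B1)
    exact squeeze_zero_norm' (Filter.eventually_of_mem (Ioi_mem_atTop 0) hb) hg0
  have key1 : ∫ ζ in Set.Ioi (0:ℝ), d1 ζ = 0 := by
    have hint : IntegrableOn d1 (Set.Ioi (0:ℝ)) := (intB.const_mul _).add intA
    have := integral_Ioi_of_hasDerivAt_of_tendsto hcont1 hf1deriv hint htop1
    rw [this, hf1zero, sub_zero]
  have eq1 : ∫ ζ in Set.Ioi (0:ℝ), ζ ^ (-(1:ℝ)/3) * ψ2 (x - ζ)
      = (1/3) * ∫ ζ in Set.Ioi (0:ℝ), ζ ^ (-(4:ℝ)/3) * G ζ := by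
    have hsplit : ∫ ζ in Set.Ioi (0:ℝ), d1 ζ
        = -(1:ℝ)/3 * (∫ ζ in Set.Ioi (0:ℝ), ζ ^ (-(4:ℝ)/3) * G ζ)
          + ∫ ζ in Set.Ioi (0:ℝ), ζ ^ (-(1:ℝ)/3) * ψ2 (x - ζ) := by
      rw [hd1', integral_add (intB.const_mul _) intA, integral_const_mul]
    rw [key1] at hsplit
    linarith
  -- step 2: integrate by parts  ζ^{-4/3} F
  set f2 : ℝ → ℝ := fun ζ => ζ ^ (-(4:ℝ)/3) * F ζ with hf2
  set d2 : ℝ → ℝ := fun ζ =>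
    -(4:ℝ)/3 * (ζ ^ (-(7:ℝ)/3) * F ζ) + ζ ^ (-(4:ℝ)/3) * G ζ with hd2'
  have hf2deriv : ∀ ζ ∈ Set.Ioi (0:ℝ), HasDerivAt f2 (d2 ζ) ζ := by
    intro ζ hζ
    have h : HasDerivAt f2 _ ζ := (hrpow (-(4:ℝ)/3) ζ hζ).mul (hFderiv ζ)
    convert h using 1
    rw [hd2', show (-(4:ℝ)/3 - 1) = -(7:ℝ)/3 by norm_num]
    ring
  have hf2zero : f2 0 = 0 := by
    simp [hf2, hF, Real.zero_rpow (by norm_num : (-(4:ℝ)/3) ≠ 0)]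
  have hcont2 : ContinuousWithinAt f2 (Set.Ici (0:ℝ)) 0 := by
    have hb : ∀ ζ ∈ Set.Ici (0:ℝ), ‖f2 ζ‖ ≤ B2 * ζ ^ ((2:ℝ)/3) := by
      intro ζ hζ
      rcases eq_or_lt_of_le (Set.mem_Ici.1 hζ : (0:ℝ) ≤ ζ) with h | h
      · rw [← h, hf2zero]
        simp [Real.zero_rpow (show ((2:ℝ)/3) ≠ 0 by norm_num)]
      · have h0 : (0:ℝ) ≤ ζ ^ (-(4:ℝ)/3) := Real.rpow_nonneg h.le _
        rw [Real.norm_eq_abs, hf2, abs_mul, abs_of_nonneg h0]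
        calc ζ ^ (-(4:ℝ)/3) * |F ζ| ≤ ζ ^ (-(4:ℝ)/3) * (B2 * ζ * ζ) :=
              mul_le_mul_of_nonneg_left (hFbound ζ h.le) h0
          _ = B2 * (ζ ^ (-(4:ℝ)/3) * ζ * ζ) := by ring
          _ = B2 * ζ ^ ((2:ℝ)/3) := by
              rw [hrmul h, hrmul h, show (-(4:ℝ)/3 + 1 + 1) = (2:ℝ)/3 by norm_num]
    have hg0 : Tendsto (fun ζ : ℝ => B2 * ζ ^ ((2:ℝ)/3)) (nhdsWithin 0 (Set.Ici 0)) (nhds 0) := by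
      have h1 : Tendsto (fun ζ : ℝ => ζ ^ ((2:ℝ)/3)) (nhds 0) (nhds ((0:ℝ) ^ ((2:ℝ)/3))) :=
        (Real.continuousAt_rpow_const 0 ((2:ℝ)/3) (Or.inr (by norm_num)))
      rw [Real.zero_rpow (by norm_num : ((2:ℝ)/3) ≠ 0)] at h1
      have h3 := (h1.mono_left (nhdsWithin_le_nhds (s := Set.Ici 0))).const_mul B2
      simpa using h3
    have := squeeze_zero_norm' (Filter.eventually_of_mem self_mem_nhdsWithin hb) hg0
    unfold ContinuousWithinAt
    rwa [hf2zero]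
  have htop2 : Tendsto f2 atTop (nhds 0) := by
    have hb : ∀ ζ ∈ Set.Ioi (1:ℝ), ‖f2 ζ‖ ≤ (2 * B0 + |ψ1 x|) * ζ ^ (-(1:ℝ)/3) := by
      intro ζ hζ
      have hζ0 : (0:ℝ) < ζ := lt_trans one_pos hζ
      have h0 : (0:ℝ) ≤ ζ ^ (-(4:ℝ)/3) := Real.rpow_nonneg hζ0.le _
      rw [Real.norm_eq_abs, hf2, abs_mul, abs_of_nonneg h0]
      calc ζ ^ (-(4:ℝ)/3) * |F ζ| ≤ ζ ^ (-(4:ℝ)/3) * ((2 * B0 + |ψ1 x|) * ζ) :=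
            mul_le_mul_of_nonneg_left (hFabs ζ (le_of_lt hζ)) h0
        _ = (2 * B0 + |ψ1 x|) * (ζ ^ (-(4:ℝ)/3) * ζ) := by ring
        _ = (2 * B0 + |ψ1 x|) * ζ ^ (-(1:ℝ)/3) := by
            rw [hrmul hζ0, show (-(4:ℝ)/3 + 1) = -(1:ℝ)/3 by norm_num]
    have hg0 : Tendsto (fun ζ : ℝ => (2 * B0 + |ψ1 x|) * ζ ^ (-(1:ℝ)/3)) atTop (nhds 0) := by
      have h1 : Tendsto (fun ζ : ℝ => ζ ^ (-((1:ℝ)/3))) atTop (nhds 0) :=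
        tendsto_rpow_neg_atTop (by norm_num)
      simpa [neg_div] using h1.const_mul (2 * B0 + |ψ1 x|)
    exact squeeze_zero_norm' (Filter.eventually_of_mem (Ioi_mem_atTop 1) hb) hg0
  have key2 : ∫ ζ in Set.Ioi (0:ℝ), d2 ζ = 0 := by
    have hint : IntegrableOn d2 (Set.Ioi (0:ℝ)) := (intC.const_mul _).add intB
    have := integral_Ioi_of_hasDerivAt_of_tendsto hcont2 hf2deriv hint htop2
    rw [this, hf2zero, sub_zero]
  have eq2 : ∫ ζ in Set.Ioi (0:ℝ), ζ ^ (-(4:ℝ)/3) * G ζ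
      = (4/3) * ∫ ζ in Set.Ioi (0:ℝ), ζ ^ (-(7:ℝ)/3) * F ζ := by
    have hsplit : ∫ ζ in Set.Ioi (0:ℝ), d2 ζ
        = -(4:ℝ)/3 * (∫ ζ in Set.Ioi (0:ℝ), ζ ^ (-(7:ℝ)/3) * F ζ)
          + ∫ ζ in Set.Ioi (0:ℝ), ζ ^ (-(4:ℝ)/3) * G ζ := by
      rw [hd2', integral_add (intC.const_mul _) intB, integral_const_mul]
    rw [key2] at hsplit
    linarith
  -- right-hand side: change of variables z = -ζ
  have RHSeq : ∫ z in Set.Iio (0:ℝ), (φ (x + z) - φ x - deriv (⇑φ) x * z) / |z| ^ ((7:ℝ)/3)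
      = ∫ ζ in Set.Ioi (0:ℝ), ζ ^ (-(7:ℝ)/3) * F ζ := by
    rw [hd1]
    have hneg := integral_comp_neg_Ioi (0:ℝ)
      (fun z => (φ (x + z) - φ x - ψ1 x * z) / |z| ^ ((7:ℝ)/3))
    rw [neg_zero, integral_Iic_eq_integral_Iio] at hneg
    rw [← hneg]
    apply setIntegral_congr_fun measurableSet_Ioi
    intro ζ hζ
    have hζ0 : (0:ℝ) < ζ := hζ
    have habs : |(-ζ)| = ζ := by rw [abs_neg, abs_of_pos hζ0]
    show (φ (x + -ζ) - φ x - ψ1 x * (-ζ)) / |(-ζ)| ^ ((7:ℝ)/3) = ζ ^ (-(7:ℝ)/3) * F ζ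
    rw [habs, show x + -ζ = x - ζ by ring]
    have hnum : φ (x - ζ) - φ x - ψ1 x * (-ζ) = F ζ := by rw [hF]; ring
    rw [hnum, show (-(7:ℝ)/3) = -((7:ℝ)/3) by norm_num, Real.rpow_neg hζ0.le,
      div_eq_mul_inv, mul_comm]
  -- assemble
  rw [hd2, eq1, eq2, RHSeq]
  ring
end

section
/- Generalized Gronwall lemma with weak singularity: let g : [0,T] → [0,∞) be bounded measurable, and suppose there are constants A, C ≥ 0 and θ > 0 such that g(t) ≤ A + C ∫₀^t (t−s)^{θ−1} g(s) ds for all t ≤ T. Then sup_{0≤t≤T} g(t) ≤ C_T · A for a constant C_T depending only on C, θ, T (not on A or g). -/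
open MeasureTheory

/-- Auxiliary recursive bound for the generalized Gronwall lemma. -/
def gronB (K : ℝ) : ℕ → ℝ
  | 0 => 1
  | n + 1 => 2 + 2 * K * gronB K n

theorem stmt_13 (T C θ : ℝ) (hT : 0 < T) (hC : 0 ≤ C) (hθ : 0 < θ) :
    ∃ CT : ℝ, ∀ (g : ℝ → ℝ) (A : ℝ), 0 ≤ A → Measurable g →
      (∀ t ∈ Set.Icc (0:ℝ) T, 0 ≤ g t) →
      (∃ M : ℝ, ∀ t ∈ Set.Icc (0:ℝ) T, g t ≤ M) →
      (∀ t ∈ Set.Icc (0:ℝ) T,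
        g t ≤ A + C * ∫ s in Set.Ioo (0:ℝ) t, (t - s) ^ (θ - 1) * g s) →
      ∀ t ∈ Set.Icc (0:ℝ) T, g t ≤ CT * A := by
  -- choose a small step δ
  set δ : ℝ := min T ((θ / (2 * C + 2)) ^ θ⁻¹) with hδdef
  have hq : (0:ℝ) < θ / (2 * C + 2) := by positivity
  have hδpos : 0 < δ := lt_min hT (Real.rpow_pos_of_pos hq _)
  have hδT : δ ≤ T := min_le_left _ _
  have hδpow : δ ^ θ ≤ θ / (2 * C + 2) := by
    have h1 : δ ^ θ ≤ ((θ / (2 * C + 2)) ^ θ⁻¹) ^ θ :=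
      Real.rpow_le_rpow hδpos.le (min_le_right _ _) hθ.le
    rwa [Real.rpow_inv_rpow hq.le hθ.ne'] at h1
  have hδθ : C * δ ^ θ ≤ θ / 2 := by
    have h2 : C * (δ ^ θ) ≤ C * (θ / (2 * C + 2)) :=
      mul_le_mul_of_nonneg_left hδpow hC
    have h3 : C * (θ / (2 * C + 2)) ≤ θ / 2 := by
      rw [← mul_div_assoc, div_le_div_iff₀ (by positivity) (by norm_num : (0:ℝ) < 2)]
      nlinarith [hθ.le]
    linarith
  -- uniform bound for the kernel away from the singularity
  set κ : ℝ := max (δ ^ (θ - 1)) (T ^ (θ - 1)) with hκdef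
  have hκ0 : 0 ≤ κ := le_trans (Real.rpow_nonneg hδpos.le _) (le_max_left _ _)
  have hκ : ∀ x : ℝ, δ ≤ x → x ≤ T → x ^ (θ - 1) ≤ κ := by
    intro x h1 h2
    rcases le_total θ 1 with h | h
    · exact le_trans (Real.rpow_le_rpow_of_nonpos hδpos h1 (by linarith)) (le_max_left _ _)
    · exact le_trans (Real.rpow_le_rpow (le_trans hδpos.le h1) h2 (by linarith)) (le_max_right _ _)
  set K : ℝ := C * κ * T with hKdef
  have hK0 : 0 ≤ K := by positivity
  set N : ℕ := ⌈T / δ⌉₊ with hNdef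
  have hN : T ≤ N * δ := by
    rw [← div_le_iff₀ hδpos]
    exact Nat.le_ceil _
  refine ⟨gronB K N, ?_⟩
  rintro g A hA hgm hg0 ⟨M, hM⟩ hineq
  have h0T : (0:ℝ) ∈ Set.Icc (0:ℝ) T := ⟨le_rfl, hT.le⟩
  have hM0 : 0 ≤ M := le_trans (hg0 0 h0T) (hM 0 h0T)
  set I : ℕ → Set ℝ := fun n => Set.Icc 0 (min (n * δ) T) with hI
  set S : ℕ → ℝ := fun n => sSup (g '' I n) with hS
  have hIsub : ∀ n, I n ⊆ Set.Icc 0 T := fun n => Set.Icc_subset_Icc le_rfl (min_le_right _ _)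
  have h0mem : ∀ n, (0:ℝ) ∈ I n := fun n => ⟨le_rfl, le_min (by positivity) hT.le⟩
  have hbdd : ∀ n, BddAbove (g '' I n) := by
    intro n
    refine ⟨M, ?_⟩
    rintro y ⟨x, hx, rfl⟩
    exact hM x (hIsub n hx)
  have hne : ∀ n, (g '' I n).Nonempty := fun n => ⟨g 0, Set.mem_image_of_mem g (h0mem n)⟩
  have hgleS : ∀ n, ∀ x ∈ I n, g x ≤ S n := fun n x hx =>
    le_csSup (hbdd n) (Set.mem_image_of_mem g hx)
  have hS0 : ∀ n, 0 ≤ S n := fun n => le_trans (hg0 0 h0T) (hgleS n 0 (h0mem n))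
  have hg0A : g 0 ≤ A := by
    have h := hineq 0 h0T
    simpa [Set.Ioo_self] using h
  have hSbase : S 0 ≤ A := by
    apply csSup_le (hne 0)
    rintro y ⟨x, hx, rfl⟩
    have hx2 : x ≤ 0 := by
      have := le_trans hx.2 (min_le_left _ _)
      simpa using this
    have hx0 : x = 0 := le_antisymm hx2 hx.1
    rw [hx0]; exact hg0A
  -- the key recurrence
  have key : ∀ n, S (n + 1) ≤ A + K * S n + (1 / 2) * S (n + 1) := by
    intro n
    apply csSup_le (hne (n + 1))
    rintro y ⟨t, ht, rfl⟩
    have ht0 : 0 ≤ t := ht.1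
    have htT : t ≤ T := le_trans ht.2 (min_le_right _ _)
    have htn : t ≤ (n + 1) * δ := by
      have := le_trans ht.2 (min_le_left _ _)
      push_cast at this ⊢
      linarith
    rcases eq_or_lt_of_le ht0 with h0 | h0
    · have hgt : g t ≤ A := by rw [← h0]; exact hg0A
      have h1 := mul_nonneg hK0 (hS0 n)
      have h2 := hS0 (n + 1)
      linarith
    · -- 0 < t; split the integral at u = max (t - δ) 0
      set u : ℝ := max (t - δ) 0 with hu
      have hu0 : 0 ≤ u := le_max_right _ _
      have hut : u ≤ t := max_le (by linarith) ht0
      have htu : t - u ≤ δ := by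
        have := le_max_left (t - δ) 0
        simp only [hu]
        linarith [le_max_left (t - δ) 0]
      have hun : u ≤ min ((n:ℝ) * δ) T := by
        refine le_min (max_le (by push_cast at htn ⊢; linarith) (by positivity)) (le_trans hut htT)
      -- integrability of the kernel and of the full integrand on Ioc 0 t
      have hker : IntegrableOn (fun s => (t - s) ^ (θ - 1)) (Set.Ioc 0 t) := by
        have h1 : IntervalIntegrable (fun x : ℝ => x ^ (θ - 1)) volume 0 t :=
          intervalIntegral.intervalIntegrable_rpow' (by linarith)
        have h2 := h1.comp_sub_left t
        simp only [sub_zero, sub_self] at h2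
        exact (intervalIntegrable_iff_integrableOn_Ioc_of_le ht0).mp h2.symm
      have hfm : Measurable (fun s => (t - s) ^ (θ - 1) * g s) :=
        ((measurable_const.sub measurable_id).pow measurable_const).mul hgm
      have hfint : IntegrableOn (fun s => (t - s) ^ (θ - 1) * g s) (Set.Ioc 0 t) := by
        apply Integrable.mono' (hker.const_mul M) hfm.aestronglyMeasurable
        filter_upwards [ae_restrict_mem measurableSet_Ioc] with s hs
        have hsT : s ∈ Set.Icc (0:ℝ) T := ⟨hs.1.le, hs.2.trans htT⟩
        have hs0 : 0 ≤ g s := hg0 s hsT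
        have hts : 0 ≤ t - s := by linarith [hs.2]
        have hk0 : 0 ≤ (t - s) ^ (θ - 1) := Real.rpow_nonneg hts _
        rw [Real.norm_eq_abs, abs_of_nonneg (mul_nonneg hk0 hs0)]
        calc (t - s) ^ (θ - 1) * g s ≤ (t - s) ^ (θ - 1) * M :=
              mul_le_mul_of_nonneg_left (hM s hsT) hk0
          _ = M * (t - s) ^ (θ - 1) := mul_comm _ _
      have hint := hineq t ⟨ht0, htT⟩
      rw [← integral_Ioc_eq_integral_Ioo] at hint
      -- split
      have hsplit : (∫ s in Set.Ioc 0 t, (t - s) ^ (θ - 1) * g s)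
          = (∫ s in Set.Ioc 0 u, (t - s) ^ (θ - 1) * g s)
            + ∫ s in Set.Ioc u t, (t - s) ^ (θ - 1) * g s := by
        rw [← setIntegral_union (Set.Ioc_disjoint_Ioc_of_le le_rfl) measurableSet_Ioc
            (hfint.mono_set (Set.Ioc_subset_Ioc_right hut))
            (hfint.mono_set (Set.Ioc_subset_Ioc_left hu0)),
          Set.Ioc_union_Ioc_eq_Ioc hu0 hut]
      -- bound away from the singularity
      have hb1 : (∫ s in Set.Ioc 0 u, (t - s) ^ (θ - 1) * g s) ≤ κ * S n * T := by
        have hconst : IntegrableOn (fun _ : ℝ => κ * S n) (Set.Ioc 0 u) :=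
          integrableOn_const measure_Ioc_lt_top.ne
        have hmono : (∫ s in Set.Ioc 0 u, (t - s) ^ (θ - 1) * g s)
            ≤ ∫ _ in Set.Ioc 0 u, κ * S n := by
          apply setIntegral_mono_on (hfint.mono_set (Set.Ioc_subset_Ioc_right hut)) hconst
            measurableSet_Ioc
          intro s hs
          have hsu : s ≤ t - δ := by
            rcases le_max_iff.mp hs.2 with h | h
            · exact h
            · linarith [hs.1]
          have h1 : δ ≤ t - s := by linarith
          have h2 : t - s ≤ T := by linarith [hs.1]
          have hsT : s ∈ Set.Icc (0:ℝ) T := ⟨hs.1.le, by linarith⟩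
          have hgs : g s ≤ S n := hgleS n s ⟨hs.1.le, le_trans hs.2 hun⟩
          exact mul_le_mul (hκ (t - s) h1 h2) hgs (hg0 s hsT) hκ0
        have hcval : (∫ _ in Set.Ioc 0 u, κ * S n) = u * (κ * S n) := by
          rw [setIntegral_const, measureReal_def, Real.volume_Ioc, smul_eq_mul,
            ENNReal.toReal_ofReal (by linarith : (0:ℝ) ≤ u - 0), sub_zero]
        have huT : u ≤ T := le_trans hut htT
        have hks : 0 ≤ κ * S n := mul_nonneg hκ0 (hS0 n)
        calc (∫ s in Set.Ioc 0 u, (t - s) ^ (θ - 1) * g s) ≤ u * (κ * S n) := by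
              rw [← hcval]; exact hmono
          _ ≤ T * (κ * S n) := mul_le_mul_of_nonneg_right huT hks
          _ = κ * S n * T := by ring
      -- value of the kernel integral near the singularity
      have hIoc : (∫ s in Set.Ioc u t, (t - s) ^ (θ - 1)) = (t - u) ^ θ / θ := by
        rw [← intervalIntegral.integral_of_le hut,
          intervalIntegral.integral_comp_sub_left (fun x => x ^ (θ - 1)) t, sub_self]
        rw [integral_rpow (Or.inl (by linarith))]
        have hθ1 : θ - 1 + 1 = θ := by ring
        rw [hθ1, Real.zero_rpow hθ.ne', sub_zero]
      have hb2 : (∫ s in Set.Ioc u t, (t - s) ^ (θ - 1) * g s)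
          ≤ S (n + 1) * δ ^ θ / θ := by
        have hmono : (∫ s in Set.Ioc u t, (t - s) ^ (θ - 1) * g s)
            ≤ ∫ s in Set.Ioc u t, (t - s) ^ (θ - 1) * S (n + 1) := by
          apply setIntegral_mono_on (hfint.mono_set (Set.Ioc_subset_Ioc_left hu0))
            ((hker.mono_set (Set.Ioc_subset_Ioc_left hu0)).mul_const _) measurableSet_Ioc
          intro s hs
          have hgs : g s ≤ S (n + 1) :=
            hgleS (n + 1) s ⟨le_trans hu0 hs.1.le, le_trans hs.2 ht.2⟩
          exact mul_le_mul_of_nonneg_left hgs (Real.rpow_nonneg (by linarith [hs.2]) _)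
        have hval : (∫ s in Set.Ioc u t, (t - s) ^ (θ - 1) * S (n + 1))
            = (t - u) ^ θ / θ * S (n + 1) := by
          rw [integral_mul_const, hIoc]
        have htu0 : 0 ≤ t - u := by linarith
        have hrp : (t - u) ^ θ ≤ δ ^ θ := Real.rpow_le_rpow htu0 htu hθ.le
        have hS' := hS0 (n + 1)
        calc (∫ s in Set.Ioc u t, (t - s) ^ (θ - 1) * g s)
            ≤ (t - u) ^ θ / θ * S (n + 1) := by rw [← hval]; exact hmono
          _ ≤ δ ^ θ / θ * S (n + 1) := by
              have hd : (t - u) ^ θ / θ ≤ δ ^ θ / θ := by gcongr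
              exact mul_le_mul_of_nonneg_right hd hS'
          _ = S (n + 1) * δ ^ θ / θ := by ring
      -- combine
      have hintle : (∫ s in Set.Ioc 0 t, (t - s) ^ (θ - 1) * g s)
          ≤ κ * S n * T + S (n + 1) * δ ^ θ / θ := by
        rw [hsplit]; exact add_le_add hb1 hb2
      have hCmul : C * (∫ s in Set.Ioc 0 t, (t - s) ^ (θ - 1) * g s)
          ≤ C * (κ * S n * T + S (n + 1) * δ ^ θ / θ) :=
        mul_le_mul_of_nonneg_left hintle hC
      have hCfac : C * (S (n + 1) * δ ^ θ / θ) ≤ (1 / 2) * S (n + 1) := by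
        have h2 : S (n + 1) * (C * δ ^ θ) ≤ S (n + 1) * (θ / 2) :=
          mul_le_mul_of_nonneg_left hδθ (hS0 (n + 1))
        have heq : C * (S (n + 1) * δ ^ θ / θ) = S (n + 1) * (C * δ ^ θ) / θ := by ring
        rw [heq, div_le_iff₀ hθ]
        nlinarith [hS0 (n + 1)]
      have hexp : C * (κ * S n * T + S (n + 1) * δ ^ θ / θ)
          = K * S n + C * (S (n + 1) * δ ^ θ / θ) := by
        rw [hKdef]; ring
      linarith [hint, hCmul]
  -- induction to get the linear bound
  have hrec : ∀ n, S (n + 1) ≤ 2 * A + 2 * K * S n := by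
    intro n
    have := key n
    linarith
  have hB : ∀ n, S n ≤ gronB K n * A := by
    intro n
    induction n with
    | zero => simpa [gronB] using hSbase
    | succ n ih =>
      have h1 : 2 * K * S n ≤ 2 * K * (gronB K n * A) :=
        mul_le_mul_of_nonneg_left ih (by positivity)
      have h2 := hrec n
      have h3 : gronB K (n + 1) * A = 2 * A + 2 * K * (gronB K n * A) := by
        show (2 + 2 * K * gronB K n) * A = _
        ring
      rw [h3]
      linarith
  intro t ht
  have htI : t ∈ I N := ⟨ht.1, le_min (le_trans ht.2 hN) ht.2⟩
  exact le_trans (hgleS N t htI) (hB N)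
end

section
/- Let u₀ ∈ C²(ℝ) ∩ H²(ℝ) be nonnegative with u₀(x*) = u₀'(x*) = u₀''(x*) = 0 at some point x*, and suppose ∫_{-∞}^0 u₀(x*+z)/|z|^{7/3} dz > 0. If u is a C^{1,2} function on [0,T] × ℝ satisfying ∂ₜu + u∂ₓu + (4/9)∫_{-∞}^0 (u(t,x+z) − u(t,x) − ∂ₓu(t,x)z)/|z|^{7/3}dz − ∂ₓₓu = 0 with u(0,·) = u₀, then ∂ₜu(0, x*) < 0, and hence there exists t* > 0 with u(t*, x*) < 0. -/
open MeasureTheory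

theorem stmt_18 (T : ℝ) (hT : 0 < T) (u₀ : ℝ → ℝ) (x₀ : ℝ)
    (hu₀C2 : ContDiff ℝ 2 u₀)
    (hu₀L2 : MemLp u₀ 2 (volume : Measure ℝ))
    (hu₀'L2 : MemLp (deriv u₀) 2 (volume : Measure ℝ))
    (hu₀''L2 : MemLp (deriv (deriv u₀)) 2 (volume : Measure ℝ))
    (hpos : ∀ x : ℝ, 0 ≤ u₀ x)
    (h0 : u₀ x₀ = 0) (h1 : deriv u₀ x₀ = 0) (h2 : deriv (deriv u₀) x₀ = 0)
    (hint : 0 < ∫ z in Set.Iio (0:ℝ), u₀ (x₀ + z) / |z| ^ ((7:ℝ)/3))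
    (u ut ux uxx : ℝ → ℝ → ℝ)
    (hut : ∀ t ∈ Set.Icc (0:ℝ) T, ∀ x : ℝ, HasDerivAt (fun s => u s x) (ut t x) t)
    (hux : ∀ t ∈ Set.Icc (0:ℝ) T, ∀ x : ℝ, HasDerivAt (fun y => u t y) (ux t x) x)
    (huxx : ∀ t ∈ Set.Icc (0:ℝ) T, ∀ x : ℝ, HasDerivAt (fun y => ux t y) (uxx t x) x)
    (hPDE : ∀ t ∈ Set.Icc (0:ℝ) T, ∀ x : ℝ,
      ut t x + u t x * ux t x
        + (4/9) * (∫ z in Set.Iio (0:ℝ),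
            (u t (x + z) - u t x - ux t x * z) / |z| ^ ((7:ℝ)/3))
        - uxx t x = 0)
    (hinit : ∀ x : ℝ, u 0 x = u₀ x) :
    ut 0 x₀ < 0 ∧ ∃ t₁ : ℝ, 0 < t₁ ∧ u t₁ x₀ < 0 := by

  have h0T : (0:ℝ) ∈ Set.Icc (0:ℝ) T := ⟨le_refl 0, hT.le⟩
  have hux0 : ∀ x, ux 0 x = deriv u₀ x := by
    intro x
    have h := hux 0 h0T x
    have he : (fun y => u 0 y) = u₀ := funext hinit
    rw [he] at h
    exact h.deriv.symm
  have huxx0 : uxx 0 x₀ = 0 := by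
    have h := huxx 0 h0T x₀
    have he : (fun y => ux 0 y) = deriv u₀ := funext hux0
    rw [he] at h
    rw [← h.deriv, h2]
  have hu0 : u 0 x₀ = 0 := by rw [hinit, h0]
  have hI : (∫ z in Set.Iio (0:ℝ),
      (u 0 (x₀ + z) - u 0 x₀ - ux 0 x₀ * z) / |z| ^ ((7:ℝ)/3))
      = ∫ z in Set.Iio (0:ℝ), u₀ (x₀ + z) / |z| ^ ((7:ℝ)/3) := by
    apply integral_congr_ae
    filter_upwards with z
    rw [hinit, hu0, hux0, h1]
    ring
  have hp := hPDE 0 h0T x₀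
  rw [hI, hu0, huxx0] at hp
  have hutneg : ut 0 x₀ < 0 := by nlinarith
  refine ⟨hutneg, ?_⟩
  have hf := hut 0 h0T x₀
  rw [hasDerivAt_iff_tendsto_slope] at hf
  have hev : ∀ᶠ t in nhdsWithin (0:ℝ) {(0:ℝ)}ᶜ,
      slope (fun s => u s x₀) 0 t < 0 := hf.eventually (eventually_lt_nhds hutneg)
  have hmono : nhdsWithin (0:ℝ) (Set.Ioi 0) ≤ nhdsWithin (0:ℝ) {(0:ℝ)}ᶜ := by
    apply nhdsWithin_mono
    intro t ht
    exact ne_of_gt ht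
  have hev2 : ∀ᶠ t in nhdsWithin (0:ℝ) (Set.Ioi 0),
      slope (fun s => u s x₀) 0 t < 0 ∧ 0 < t :=
    (hev.filter_mono hmono).and (eventually_mem_nhdsWithin)
  obtain ⟨t₁, hs, ht₁⟩ := hev2.exists
  refine ⟨t₁, ht₁, ?_⟩
  rw [slope_def_field, hu0, sub_zero, sub_zero] at hs
  exact (div_neg_iff.mp hs).elim (fun h => absurd ht₁ (not_lt.mpr h.2.le)) (fun h => h.1)
end
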